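/- As formal power series, Σ_{n≥0} q^n/∏_{j=0}^{n}(1−q^{2j+1}) = Σ_{n≥0} q^{2n²+2n}/∏_{j=0}^{n}(1−q^{2j+1})², i.e., the two standard expressions for Ramanujan's third order mock theta function ω(q) agree. -/

import Mathlib

open PowerSeries Finset

/-! Auxiliary machinery: sums of families of power series whose `k`-th member
has order at least `k`, realized via truncated coefficient sums. -/

/-- Truncated sum of a family of power series. -/
noncomputable def OSum (f : ℕ → PowerSeries ℚ) : PowerSeries ℚ :=
  PowerSeries.mk fun n => ∑ k ∈ Finset.range (n + 1), PowerSeries.coeff (R := ℚ) n (f k)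

/-- Admissibility: the `k`-th member has order at least `k`. -/
def Adm (f : ℕ → PowerSeries ℚ) : Prop :=
  ∀ n k, n < k → PowerSeries.coeff (R := ℚ) n (f k) = 0

lemma coeff_X_pow_mul_zero {a n : ℕ} (h : n < a) (g : PowerSeries ℚ) :
    PowerSeries.coeff (R := ℚ) n (PowerSeries.X ^ a * g) = 0 :=
  (PowerSeries.X_pow_dvd_iff.mp (dvd_mul_right _ _)) n h

lemma adm_aux {e : ℕ → ℕ} (he : ∀ k, k ≤ e k) (g : ℕ → PowerSeries ℚ) :
    Adm (fun k => PowerSeries.X ^ (e k) * g k) :=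
  fun n k h => coeff_X_pow_mul_zero (lt_of_lt_of_le h (he k)) _

lemma coeff_OSum {f : ℕ → PowerSeries ℚ} (hf : Adm f) {n N : ℕ} (h : n < N) :
    PowerSeries.coeff (R := ℚ) n (OSum f) = ∑ k ∈ Finset.range N, PowerSeries.coeff (R := ℚ) n (f k) := by
  rw [OSum, PowerSeries.coeff_mk]
  refine Finset.sum_subset (Finset.range_subset_range.mpr h) fun k hk hk' => ?_
  exact hf n k (by simp only [Finset.mem_range] at hk'; omega)

lemma OSum_shift {f : ℕ → PowerSeries ℚ} (hf : Adm f) :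
    OSum f = f 0 + OSum (fun k => f (k + 1)) := by
  ext n
  rw [map_add, coeff_OSum hf (show n < n + 2 by omega), Finset.sum_range_succ',
    OSum, PowerSeries.coeff_mk]
  ring

lemma OSum_mul {f : ℕ → PowerSeries ℚ} (hf : Adm f) (g : PowerSeries ℚ) :
    g * OSum f = OSum (fun k => g * f k) := by
  ext n
  have h1 : ∀ p ∈ Finset.HasAntidiagonal.antidiagonal n,
      (PowerSeries.coeff (R := ℚ) p.1 g) * PowerSeries.coeff (R := ℚ) p.2 (OSum f)
      = ∑ k ∈ Finset.range (n + 1),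
          (PowerSeries.coeff (R := ℚ) p.1 g) * PowerSeries.coeff (R := ℚ) p.2 (f k) := by
    intro p hp
    rw [coeff_OSum hf (show p.2 < n + 1 by
      have := Finset.HasAntidiagonal.mem_antidiagonal.mp hp; omega), Finset.mul_sum]
  rw [PowerSeries.coeff_mul, Finset.sum_congr rfl h1, Finset.sum_comm, OSum,
    PowerSeries.coeff_mk]
  exact Finset.sum_congr rfl fun k _ => (PowerSeries.coeff_mul n g (f k)).symm

lemma OSum_sub (f g : ℕ → PowerSeries ℚ) :
    OSum f - OSum g = OSum (fun k => f k - g k) := by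
  ext n
  simp [OSum, Finset.sum_sub_distrib]

/-! The specialized Rogers–Fine iteration. -/

/-- `D m k = ∏_{i<k} (1 - q^{2(m+i)+3})⁻¹`. -/
noncomputable def Dd (m k : ℕ) : PowerSeries ℚ :=
  ∏ i ∈ Finset.range k, ((1 : PowerSeries ℚ) - PowerSeries.X ^ (2 * (m + i) + 3))⁻¹

/-- `Ff m = Σ_n q^{(2m+1)n} / ∏_{i=1}^{n} (1 - q^{2m+1+2i})`. -/
noncomputable def Ff (m : ℕ) : PowerSeries ℚ :=
  OSum (fun n => PowerSeries.X ^ ((2 * m + 1) * n) * Dd m n)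

noncomputable def Ll (m : ℕ) : PowerSeries ℚ :=
  (1 - PowerSeries.X ^ (2 * m + 1)) * Ff m

lemma admf (m : ℕ) : Adm (fun n => PowerSeries.X ^ ((2 * m + 1) * n) * Dd m n) :=
  adm_aux (fun k => by nlinarith) _

lemma one_sub_X_pow_mul_inv (a : ℕ) (ha : a ≠ 0) :
    ((1 : PowerSeries ℚ) - PowerSeries.X ^ a) *
      ((1 : PowerSeries ℚ) - PowerSeries.X ^ a)⁻¹ = 1 := by
  apply PowerSeries.mul_inv_cancel
  simp [map_pow, zero_pow ha]

lemma Dd_succ (m n : ℕ) :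
    Dd m (n + 1) = Dd m n * ((1 : PowerSeries ℚ) - PowerSeries.X ^ (2 * (m + n) + 3))⁻¹ :=
  Finset.prod_range_succ _ _

lemma Dd_succ' (m n : ℕ) :
    Dd m (n + 1) = ((1 : PowerSeries ℚ) - PowerSeries.X ^ (2 * m + 3))⁻¹ * Dd (m + 1) n := by
  rw [Dd, Finset.prod_range_succ', mul_comm,
    (by omega : 2 * (m + 0) + 3 = 2 * m + 3)]
  congr 1
  rw [Dd]
  exact Finset.prod_congr rfl fun i _ => by
    rw [(by omega : m + (i + 1) = m + 1 + i)]

lemma term_eq (m n : ℕ) :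
    PowerSeries.X ^ ((2 * m + 1) * (n + 1)) * Dd m (n + 1)
      - PowerSeries.X ^ (2 * m + 1) * (PowerSeries.X ^ ((2 * m + 1) * n) * Dd m n)
    = PowerSeries.X ^ (4 * m + 4) * ((1 : PowerSeries ℚ) - PowerSeries.X ^ (2 * m + 3))⁻¹ *
        (PowerSeries.X ^ ((2 * m + 3) * n) * Dd (m + 1) n) := by
  have h3 := one_sub_X_pow_mul_inv (2 * (m + n) + 3) (by omega)
  have key : Dd m (n + 1) - Dd m n = PowerSeries.X ^ (2 * (m + n) + 3) * Dd m (n + 1) := by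
    rw [Dd_succ m n]
    linear_combination (Dd m n) * h3
  have h2 := Dd_succ' m n
  calc PowerSeries.X ^ ((2 * m + 1) * (n + 1)) * Dd m (n + 1)
        - PowerSeries.X ^ (2 * m + 1) * (PowerSeries.X ^ ((2 * m + 1) * n) * Dd m n)
      = PowerSeries.X ^ ((2 * m + 1) * (n + 1)) * (Dd m (n + 1) - Dd m n) := by ring
    _ = PowerSeries.X ^ ((2 * m + 1) * (n + 1)) *
          (PowerSeries.X ^ (2 * (m + n) + 3) * Dd m (n + 1)) := by rw [key]
    _ = PowerSeries.X ^ ((2 * m + 1) * (n + 1)) *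
          (PowerSeries.X ^ (2 * (m + n) + 3) *
            (((1 : PowerSeries ℚ) - PowerSeries.X ^ (2 * m + 3))⁻¹ * Dd (m + 1) n)) := by rw [h2]
    _ = _ := by ring

lemma L_rec (m : ℕ) :
    Ll m = 1 + PowerSeries.X ^ (4 * m + 4) *
        ((1 : PowerSeries ℚ) - PowerSeries.X ^ (2 * m + 3))⁻¹ *
        ((1 : PowerSeries ℚ) - PowerSeries.X ^ (2 * m + 3))⁻¹ * Ll (m + 1) := by
  have hE := one_sub_X_pow_mul_inv (2 * m + 3) (by omega)
  have hR : PowerSeries.X ^ (4 * m + 4) *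
        ((1 : PowerSeries ℚ) - PowerSeries.X ^ (2 * m + 3))⁻¹ *
        ((1 : PowerSeries ℚ) - PowerSeries.X ^ (2 * m + 3))⁻¹ * Ll (m + 1)
      = (PowerSeries.X ^ (4 * m + 4) *
          ((1 : PowerSeries ℚ) - PowerSeries.X ^ (2 * m + 3))⁻¹) * Ff (m + 1) := by
    rw [Ll]
    linear_combination (PowerSeries.X ^ (4 * m + 4) *
      ((1 : PowerSeries ℚ) - PowerSeries.X ^ (2 * m + 3))⁻¹ * Ff (m + 1)) * hE
  rw [hR, Ll, Ff, Ff, one_sub_mul, OSum_mul (admf m), OSum_shift (admf m),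
    OSum_mul (admf (m + 1))]
  have h0 : (PowerSeries.X : PowerSeries ℚ) ^ ((2 * m + 1) * 0) * Dd m 0 = 1 := by
    simp [Dd]
  rw [h0, add_sub_assoc, OSum_sub]
  congr 1
  refine congrArg OSum (funext fun n => ?_)
  exact term_eq m n

lemma L_iter (N : ℕ) :
    Ll 0 = (∑ k ∈ Finset.range N, PowerSeries.X ^ (2 * k ^ 2 + 2 * k) * (Dd 0 k) ^ 2)
      + PowerSeries.X ^ (2 * N ^ 2 + 2 * N) * (Dd 0 N) ^ 2 * Ll N := by
  induction N with
  | zero => simp [Dd]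
  | succ N ih =>
    rw [ih, L_rec N, Finset.sum_range_succ]
    have hD : Dd 0 (N + 1) = Dd 0 N * ((1 : PowerSeries ℚ) - PowerSeries.X ^ (2 * N + 3))⁻¹ := by
      rw [Dd_succ 0 N, (by omega : 2 * (0 + N) + 3 = 2 * N + 3)]
    rw [hD]
    ring

lemma admW : Adm (fun k => PowerSeries.X ^ (2 * k ^ 2 + 2 * k) * (Dd 0 k) ^ 2) :=
  adm_aux (fun k => by nlinarith) _

lemma L0_eq : Ll 0 = OSum (fun k => PowerSeries.X ^ (2 * k ^ 2 + 2 * k) * (Dd 0 k) ^ 2) := by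
  ext n
  rw [L_iter (n + 1), map_add, OSum, PowerSeries.coeff_mk, map_sum, mul_assoc,
    coeff_X_pow_mul_zero (show n < 2 * (n + 1) ^ 2 + 2 * (n + 1) by nlinarith), add_zero]

lemma P_eq (k : ℕ) :
    (∏ j ∈ Finset.range (k + 1), ((1 : PowerSeries ℚ) - PowerSeries.X ^ (2 * j + 1))⁻¹)
      = Dd 0 k * ((1 : PowerSeries ℚ) - PowerSeries.X)⁻¹ := by
  rw [Finset.prod_range_succ']
  congr 1
  · rw [Dd]
    refine Finset.prod_congr rfl fun i _ => ?_
    congr 3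
    omega
  · norm_num

/-- The coefficient of `q^n` in `Σ_{k≥0} q^k / ∏_{j=0}^{k} (1 − q^{2j+1})`,
computed in `ℚ[[q]]`. The `k`-th summand has order `≥ k`, so truncating the sum
at `k = n` captures the coefficient of `q^n`. -/
noncomputable def mockOmegaCoeffAlt (n : ℕ) : ℚ :=
  ∑ k ∈ Finset.range (n + 1),
    PowerSeries.coeff (R := ℚ) n
      (PowerSeries.X ^ k *
        ∏ j ∈ Finset.range (k + 1), (1 - PowerSeries.X ^ (2 * j + 1) : PowerSeries ℚ)⁻¹)

/-- The coefficient of `q^n` in `Σ_{k≥0} q^{2k²+2k} / ∏_{j=0}^{k} (1 − q^{2j+1})²`,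
computed in `ℚ[[q]]`. -/
noncomputable def mockOmegaCoeff (n : ℕ) : ℚ :=
  ∑ k ∈ Finset.range (n + 1),
    PowerSeries.coeff (R := ℚ) n
      (PowerSeries.X ^ (2 * k ^ 2 + 2 * k) *
        (∏ j ∈ Finset.range (k + 1), (1 - PowerSeries.X ^ (2 * j + 1) : PowerSeries ℚ)⁻¹) ^ 2)

/-- As formal power series,
`Σ_{n≥0} q^n/∏_{j=0}^{n}(1−q^{2j+1}) = Σ_{n≥0} q^{2n²+2n}/∏_{j=0}^{n}(1−q^{2j+1})²`:
the two standard expressions for Ramanujan's third order mock theta function `ω(q)` agree. -/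
theorem mockOmega_two_expressions_agree : ∀ n : ℕ, mockOmegaCoeffAlt n = mockOmegaCoeff n := by
  have hA : ((1 : PowerSeries ℚ) - PowerSeries.X) * ((1 : PowerSeries ℚ) - PowerSeries.X)⁻¹ = 1 := by
    have h := one_sub_X_pow_mul_inv 1 one_ne_zero
    simpa using h
  have admD : Adm (fun k => PowerSeries.X ^ k * Dd 0 k) := adm_aux (fun k => le_refl k) _
  have hF0 : Ff 0 = OSum (fun k => PowerSeries.X ^ k * Dd 0 k) := by
    rw [Ff]
    refine congrArg OSum (funext fun n => ?_)
    norm_num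
  have key : OSum (fun k => PowerSeries.X ^ k *
        ∏ j ∈ Finset.range (k + 1), ((1 : PowerSeries ℚ) - PowerSeries.X ^ (2 * j + 1))⁻¹)
      = OSum (fun k => PowerSeries.X ^ (2 * k ^ 2 + 2 * k) *
        (∏ j ∈ Finset.range (k + 1), ((1 : PowerSeries ℚ) - PowerSeries.X ^ (2 * j + 1))⁻¹) ^ 2) := by
    have e1 : (fun k => PowerSeries.X ^ k *
          ∏ j ∈ Finset.range (k + 1), ((1 : PowerSeries ℚ) - PowerSeries.X ^ (2 * j + 1))⁻¹)
        = fun k => ((1 : PowerSeries ℚ) - PowerSeries.X)⁻¹ * (PowerSeries.X ^ k * Dd 0 k) := by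
      funext k; rw [P_eq]; ring
    have e2 : (fun k => PowerSeries.X ^ (2 * k ^ 2 + 2 * k) *
          (∏ j ∈ Finset.range (k + 1), ((1 : PowerSeries ℚ) - PowerSeries.X ^ (2 * j + 1))⁻¹) ^ 2)
        = fun k => ((1 : PowerSeries ℚ) - PowerSeries.X)⁻¹ * ((1 : PowerSeries ℚ) - PowerSeries.X)⁻¹ *
            (PowerSeries.X ^ (2 * k ^ 2 + 2 * k) * (Dd 0 k) ^ 2) := by
      funext k; rw [P_eq]; ring
    rw [e1, e2, ← OSum_mul admD, ← hF0, ← OSum_mul admW, ← L0_eq, Ll,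
      (by norm_num : ((1 : PowerSeries ℚ) - PowerSeries.X ^ (2 * 0 + 1)) = (1 : PowerSeries ℚ) - PowerSeries.X)]
    linear_combination (-(((1 : PowerSeries ℚ) - PowerSeries.X)⁻¹ * Ff 0)) * hA
  intro n
  have h1 : mockOmegaCoeffAlt n = PowerSeries.coeff (R := ℚ) n (OSum (fun k => PowerSeries.X ^ k *
      ∏ j ∈ Finset.range (k + 1), ((1 : PowerSeries ℚ) - PowerSeries.X ^ (2 * j + 1))⁻¹)) := by
    rw [OSum, PowerSeries.coeff_mk, mockOmegaCoeffAlt]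
  have h2 : mockOmegaCoeff n = PowerSeries.coeff (R := ℚ) n (OSum (fun k => PowerSeries.X ^ (2 * k ^ 2 + 2 * k) *
      (∏ j ∈ Finset.range (k + 1), ((1 : PowerSeries ℚ) - PowerSeries.X ^ (2 * j + 1))⁻¹) ^ 2)) := by
    rw [OSum, PowerSeries.coeff_mk, mockOmegaCoeff]
  rw [h1, h2, key]
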